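/- Let 𝒢 be a sequence of covers G₀ ←φ₀− G₁ ←φ₁− G₂ ←φ₂− ⋯ in which every φᵢ is bidirectional. Then the continuous surjection of V_𝒢 determined by E_𝒢 (the unique map g with (x,g(x)) ∈ E_𝒢 for all x) is a homeomorphism of V_𝒢 onto itself. -/
import Mathlib


open Filter Topology
open scoped ENNReal

/-- `φ` is a graph homomorphism from `(V₁,E₁)` to `(V₂,E₂)`. -/
def IsGraphHom {V₁ V₂ : Type*} (E₁ : V₁ → V₁ → Prop) (E₂ : V₂ → V₂ → Prop)
    (φ : V₁ → V₂) : Prop :=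
  ∀ u v, E₁ u v → E₂ (φ u) (φ v)

/-- `φ` is edge surjective. -/
def IsEdgeSurj {V₁ V₂ : Type*} (E₁ : V₁ → V₁ → Prop) (E₂ : V₂ → V₂ → Prop)
    (φ : V₁ → V₂) : Prop :=
  ∀ u v, E₂ u v → ∃ u' v', E₁ u' v' ∧ φ u' = u ∧ φ v' = v

/-- `φ` is +directional. -/
def IsPlusDirectional {V₁ V₂ : Type*} (E₁ : V₁ → V₁ → Prop) (φ : V₁ → V₂) : Prop :=
  ∀ u v v', E₁ u v → E₁ u v' → φ v = φ v'

/-- `φ` is bidirectional. -/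
def IsBidirectional {V₁ V₂ : Type*} (E₁ : V₁ → V₁ → Prop) (φ : V₁ → V₂) : Prop :=
  IsPlusDirectional E₁ φ ∧ ∀ u u' v, E₁ u v → E₁ u' v → φ u = φ u'

/-- `φ` is a cover: a +directional edge-surjective graph homomorphism. -/
def IsCover {V₁ V₂ : Type*} (E₁ : V₁ → V₁ → Prop) (E₂ : V₂ → V₂ → Prop)
    (φ : V₁ → V₂) : Prop :=
  IsGraphHom E₁ E₂ φ ∧ IsPlusDirectional E₁ φ ∧ IsEdgeSurj E₁ E₂ φ

/-- every vertex has an incoming and an outgoing edge. -/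
def IsSurjDigraph {V : Type*} (E : V → V → Prop) : Prop :=
  (∀ v, ∃ u, E u v) ∧ ∀ u, ∃ v, E u v

/-- the inverse limit `V_𝒢` of a sequence of graph maps. -/
abbrev InvLim (V : ℕ → Type*) (φ : ∀ n, V (n + 1) → V n) : Type _ :=
  { x : ∀ n, V n // ∀ n, φ n (x (n + 1)) = x n }

/-- the relation `E_𝒢` on `V_𝒢`. -/
def ERel {V : ℕ → Type*} (E : ∀ n, V n → V n → Prop) (φ : ∀ n, V (n + 1) → V n)
    (x y : InvLim V φ) : Prop :=
  ∀ n, E n (x.1 n) (y.1 n)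

/-- the product-of-discrete topology on the inverse limit, given explicitly. -/
def invLimTop (V : ℕ → Type*) (φ : ∀ n, V (n + 1) → V n) :
    TopologicalSpace (InvLim V φ) :=
  @instTopologicalSpaceSubtype _ _ (@Pi.topologicalSpace ℕ V fun _ => ⊥)

/-- the distance function of an explicitly given metric space structure. -/
noncomputable def mdist {X : Type*} (m : MetricSpace X) (x y : X) : ℝ :=
  @dist X m.toDist x y

/-- the topology induced by an explicitly given metric space structure. -/
def mtop {X : Type*} (m : MetricSpace X) : TopologicalSpace X :=
  @UniformSpace.toTopologicalSpace X m.toUniformSpace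

/-- the (half-open) list of vertices `vtx i 0, vtx i 1, …, vtx i (len-1)` of
the circuit `c_{n,i}`, the final vertex (equal to the initial one) omitted. -/
def circList {Vn : Type*} (vtx : ℕ → ℕ → Vn) (i len : ℕ) : List Vn :=
  List.ofFn fun j : Fin len => vtx i (j : ℕ)

theorem stmt1
    (V : ℕ → Type) [∀ n, TopologicalSpace (V n)] [∀ n, DiscreteTopology (V n)]
    [∀ n, Fintype (V n)] [∀ n, Nonempty (V n)]
    (E : ∀ n, V n → V n → Prop) (φ : ∀ n, V (n + 1) → V n)
    (hgraph : ∀ n, IsSurjDigraph (E n))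
    (hcov : ∀ n, IsCover (E (n + 1)) (E n) (φ n))
    (hbi : ∀ n, IsBidirectional (E (n + 1)) (φ n)) :
    ∃ g : InvLim V φ → InvLim V φ,
      (∀ x y, ERel E φ x y ↔ g x = y) ∧ IsHomeomorph g := by
  classical
  have hout : ∀ n (v : V n), ∃ w, E n v w := fun n => (hgraph n).2
  have hin : ∀ n (v : V n), ∃ u, E n u v := fun n => (hgraph n).1
  let out : ∀ n, V n → V n := fun n v => (hout n v).choose
  have hout' : ∀ n v, E n v (out n v) := fun n v => (hout n v).choose_spec
  let inn : ∀ n, V n → V n := fun n v => (hin n v).choose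
  have hin' : ∀ n v, E n (inn n v) v := fun n v => (hin n v).choose_spec
  have hhom : ∀ n, IsGraphHom (E (n+1)) (E n) (φ n) := fun n => (hcov n).1
  have hplus : ∀ n, IsPlusDirectional (E (n+1)) (φ n) := fun n => (hcov n).2.1
  have hminus : ∀ n u u' v, E (n+1) u v → E (n+1) u' v → φ n u = φ n u' :=
    fun n => (hbi n).2
  -- the forward map
  have gcons : ∀ (x : InvLim V φ) n,
      φ n (φ (n+1) (out (n+2) (x.1 (n+2)))) = φ n (out (n+1) (x.1 (n+1))) := by
    intro x n
    refine hplus n (x.1 (n+1)) _ _ ?_ (hout' (n+1) _)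
    have := hhom (n+1) _ _ (hout' (n+2) (x.1 (n+2)))
    rwa [x.2 (n+1)] at this
  let g : InvLim V φ → InvLim V φ := fun x => ⟨fun n => φ n (out (n+1) (x.1 (n+1))),
    fun n => gcons x n⟩
  have hgrel : ∀ x, ERel E φ x (g x) := by
    intro x n
    have := hhom n _ _ (hout' (n+1) (x.1 (n+1)))
    rwa [x.2 n] at this
  have huniq : ∀ x y, ERel E φ x y → g x = y := by
    intro x y h
    apply Subtype.ext; funext n
    have := hplus n (x.1 (n+1)) _ _ (h (n+1)) (hout' (n+1) (x.1 (n+1)))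
    rw [show (g x).1 n = φ n (out (n+1) (x.1 (n+1))) from rfl, ← this, y.2 n]
  -- the backward map
  have hcons : ∀ (x : InvLim V φ) n,
      φ n (φ (n+1) (inn (n+2) (x.1 (n+2)))) = φ n (inn (n+1) (x.1 (n+1))) := by
    intro x n
    refine hminus n _ _ (x.1 (n+1)) ?_ (hin' (n+1) _)
    have := hhom (n+1) _ _ (hin' (n+2) (x.1 (n+2)))
    rwa [x.2 (n+1)] at this
  let h : InvLim V φ → InvLim V φ := fun x => ⟨fun n => φ n (inn (n+1) (x.1 (n+1))),
    fun n => hcons x n⟩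
  have hhrel : ∀ y, ERel E φ (h y) y := by
    intro y n
    have := hhom n _ _ (hin' (n+1) (y.1 (n+1)))
    rwa [y.2 n] at this
  have huniq' : ∀ x y, ERel E φ x y → h y = x := by
    intro x y hr
    apply Subtype.ext; funext n
    have := hminus n _ (x.1 (n+1)) _ (hin' (n+1) (y.1 (n+1))) (hr (n+1))
    rw [show (h y).1 n = φ n (inn (n+1) (y.1 (n+1))) from rfl, this, x.2 n]
  have hgh : ∀ y, g (h y) = y := fun y => huniq _ _ (hhrel y)
  have hhg : ∀ x, h (g x) = x := fun x => huniq' _ _ (hgrel x)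
  have cg : Continuous g := by
    refine Continuous.subtype_mk (continuous_pi fun n => ?_) _
    exact (continuous_of_discreteTopology (f := fun v : V (n+1) => φ n (out (n+1) v))).comp
      ((continuous_apply (n+1)).comp continuous_subtype_val)
  have ch : Continuous h := by
    refine Continuous.subtype_mk (continuous_pi fun n => ?_) _
    exact (continuous_of_discreteTopology (f := fun v : V (n+1) => φ n (inn (n+1) v))).comp
      ((continuous_apply (n+1)).comp continuous_subtype_val)
  refine ⟨g, fun x y => ⟨huniq x y, fun e => e ▸ hgrel x⟩, ?_⟩
  exact (Homeomorph.mk ⟨g, h, hhg, hgh⟩ cg ch).isHomeomorph
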